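/- arXiv:2102.06280 — 3 statements merged into one kernel-verified Lean document; each statement's English description precedes it below -/
import Mathlib

section
/- For every integer m ≥ 0 and every integer n ≥ N, the product Φ_{(m+n)B : mB+1} = P(mB+1)·P(mB+2)⋯P((m+n)B) of nB consecutive consensus matrices is a strictly positive matrix; moreover every entry of this product is at least β^{nB}. (Intermediate claim stated in the paper following Assumptions 1–2.) -/
namespace Stmt7Aux

variable {N : ℕ}

lemma entry_mul_le (A B : Matrix (Fin N) (Fin N) ℝ)
    (hA : ∀ i j, 0 ≤ A i j) (hB : ∀ i j, 0 ≤ B i j) (a c b : Fin N) :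
    A a c * B c b ≤ (A * B) a b := by
  rw [Matrix.mul_apply]
  exact Finset.single_le_sum (fun l _ => mul_nonneg (hA a l) (hB l b)) (Finset.mem_univ c)

lemma prod_nonneg (L : List (Matrix (Fin N) (Fin N) ℝ))
    (h : ∀ M ∈ L, ∀ i j, 0 ≤ M i j) : ∀ i j, 0 ≤ L.prod i j := by
  induction L with
  | nil =>
    intro i j
    simp [Matrix.one_apply]
    split <;> norm_num
  | cons M L ih =>
    intro i j
    rw [List.prod_cons, Matrix.mul_apply]
    exact Finset.sum_nonneg fun l _ => mul_nonneg (h M (List.mem_cons_self) i l)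
      (ih (fun M' hM' => h M' (List.mem_cons_of_mem _ hM')) l j)

lemma prod_diag_pos (L : List (Matrix (Fin N) (Fin N) ℝ))
    (h : ∀ M ∈ L, ∀ i j, 0 ≤ M i j) (hd : ∀ M ∈ L, ∀ i, 0 < M i i) :
    ∀ i, 0 < L.prod i i := by
  induction L with
  | nil => intro i; simp [Matrix.one_apply]
  | cons M L ih =>
    intro i
    have h1 : ∀ M' ∈ L, ∀ i j, 0 ≤ M' i j := fun M' hM' => h M' (List.mem_cons_of_mem _ hM')
    have := entry_mul_le M L.prod (h M (List.mem_cons_self)) (prod_nonneg L h1) i i i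
    rw [List.prod_cons]
    calc (0:ℝ) < M i i * L.prod i i :=
          mul_pos (hd M (List.mem_cons_self) i)
            (ih h1 (fun M' hM' => hd M' (List.mem_cons_of_mem _ hM')) i)
      _ ≤ _ := this

lemma prod_entry_lb (β : ℝ) (hβ : 0 ≤ β) (L : List (Matrix (Fin N) (Fin N) ℝ))
    (h : ∀ M ∈ L, ∀ i j, 0 ≤ M i j)
    (hlb : ∀ M ∈ L, ∀ i j, M i j ≠ 0 → β ≤ M i j) :
    ∀ i j, L.prod i j ≠ 0 → β ^ L.length ≤ L.prod i j := by
  induction L with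
  | nil =>
    intro i j hne
    simp only [List.prod_nil, List.length_nil, pow_zero]
    rcases eq_or_ne i j with rfl | hij
    · simp [Matrix.one_apply]
    · exact absurd (by simp [Matrix.one_apply, hij]) hne
  | cons M L ih =>
    intro i j hne
    have h1 : ∀ M' ∈ L, ∀ i j, 0 ≤ M' i j := fun M' hM' => h M' (List.mem_cons_of_mem _ hM')
    have hlb1 : ∀ M' ∈ L, ∀ i j, M' i j ≠ 0 → β ≤ M' i j :=
      fun M' hM' => hlb M' (List.mem_cons_of_mem _ hM')
    rw [List.prod_cons, Matrix.mul_apply] at hne ⊢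
    have hex : ∃ l, M i l * L.prod l j ≠ 0 := by
      by_contra hall
      push_neg at hall
      exact hne (Finset.sum_eq_zero fun l _ => hall l)
    obtain ⟨l, hl⟩ := hex
    have hMl : M i l ≠ 0 := fun hz => hl (by simp [hz])
    have hPl : L.prod l j ≠ 0 := fun hz => hl (by simp [hz])
    calc β ^ (M :: L).length = β * β ^ L.length := by rw [List.length_cons, pow_succ']
      _ ≤ M i l * L.prod l j :=
          mul_le_mul (hlb M (List.mem_cons_self) i l hMl) (ih h1 hlb1 l j hPl)
            (pow_nonneg hβ _) (le_trans hβ (hlb M (List.mem_cons_self) i l hMl))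
      _ ≤ ∑ l', M i l' * L.prod l' j :=
          Finset.single_le_sum
            (fun l' _ => mul_nonneg (h M (List.mem_cons_self) i l') (prod_nonneg L h1 l' j))
            (Finset.mem_univ l)

lemma crossing {α : Type*} {R : α → α → Prop} {s : Finset α} {a c : α}
    (h : Relation.ReflTransGen R a c) (ha : a ∈ s) (hc : c ∉ s) :
    ∃ x ∈ s, ∃ y, y ∉ s ∧ R x y := by
  induction h with
  | refl => exact absurd ha hc
  | @tail b c' h1 h2 ih =>
    by_cases hb : b ∈ s
    · exact ⟨b, hb, c', hc, h2⟩
    · exact ih hb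

end Stmt7Aux

/-- Under the doubly stochastic, `β`-bounded-entries and `B`-bounded-connectivity
assumptions, for every `m ≥ 0` and `n ≥ N`, the product
`Φ_{(m+n)B : mB+1} = P(mB+1)⋯P((m+n)B)` of `nB` consecutive consensus matrices is a
strictly positive matrix; indeed every entry is at least `β^(nB)`. -/
theorem stmt7 (N B : ℕ) (hN : 2 ≤ N) (hB : 1 ≤ B)
    (β : ℝ) (hβ0 : 0 < β) (hβ1 : β < 1)
    (P : ℕ → Matrix (Fin N) (Fin N) ℝ)
    (hPnn : ∀ k, 1 ≤ k → ∀ i j, 0 ≤ P k i j)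
    (hProw : ∀ k, 1 ≤ k → ∀ i, ∑ j, P k i j = 1)
    (hPcol : ∀ k, 1 ≤ k → ∀ j, ∑ i, P k i j = 1)
    (hPdiag : ∀ k, 1 ≤ k → ∀ i, β ≤ P k i i)
    (hPoff : ∀ k, 1 ≤ k → ∀ i j, P k i j ≠ 0 → β ≤ P k i j)
    (hconn : ∀ m : ℕ, ∀ i j : Fin N,
      Relation.ReflTransGen
        (fun a b => ∃ k ∈ Finset.Icc (m * B + 1) ((m + 1) * B), 0 < P k a b) i j)
    (Phi : ℕ → ℕ → Matrix (Fin N) (Fin N) ℝ)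
    (hPhi : ∀ k s, Phi k s = ((List.range' s (k + 1 - s)).map P).prod) :
    ∀ m n : ℕ, N ≤ n → ∀ i j : Fin N,
      β ^ (n * B) ≤ Phi ((m + n) * B) (m * B + 1) i j := by
  intro m n hn i j
  classical
  have hβ0' : (0:ℝ) ≤ β := hβ0.le
  -- properties of factors in any product over a range starting at a positive index
  have hNNL : ∀ s len, 1 ≤ s → ∀ M ∈ (List.range' s len).map P, ∀ a b, 0 ≤ M a b := by
    intro s len hs M hM a b
    obtain ⟨k, hk, rfl⟩ := List.mem_map.1 hM
    rw [List.mem_range'_1] at hk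
    exact hPnn k (le_trans hs hk.1) a b
  have hDPL : ∀ s len, 1 ≤ s → ∀ M ∈ (List.range' s len).map P, ∀ a, 0 < M a a := by
    intro s len hs M hM a
    obtain ⟨k, hk, rfl⟩ := List.mem_map.1 hM
    rw [List.mem_range'_1] at hk
    exact lt_of_lt_of_le hβ0 (hPdiag k (le_trans hs hk.1) a)
  have hLBL : ∀ s len, 1 ≤ s → ∀ M ∈ (List.range' s len).map P, ∀ a b, M a b ≠ 0 → β ≤ M a b := by
    intro s len hs M hM a b
    obtain ⟨k, hk, rfl⟩ := List.mem_map.1 hM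
    rw [List.mem_range'_1] at hk
    exact hPoff k (le_trans hs hk.1) a b
  set L : ℕ → List (Matrix (Fin N) (Fin N) ℝ) := fun t => (List.range' (m*B+1) (t*B)).map P
    with hLdef
  set A : ℕ → Matrix (Fin N) (Fin N) ℝ := fun t => (L t).prod with hAdef
  have hms : 1 ≤ m*B+1 := Nat.le_add_left 1 _
  have hnnA : ∀ t a b, 0 ≤ A t a b := fun t => Stmt7Aux.prod_nonneg _ (hNNL _ _ hms)
  set Q : ℕ → Matrix (Fin N) (Fin N) ℝ :=
    fun t => ((List.range' ((m+t)*B+1) B).map P).prod with hQdef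
  have hnnQ : ∀ t a b, 0 ≤ Q t a b := fun t => Stmt7Aux.prod_nonneg _ (hNNL _ _ (Nat.le_add_left 1 _))
  have hdQ : ∀ t a, 0 < Q t a a :=
    fun t => Stmt7Aux.prod_diag_pos _ (hNNL _ _ (Nat.le_add_left 1 _)) (hDPL _ _ (Nat.le_add_left 1 _))
  have hsplit : ∀ t, A (t+1) = A t * Q t := by
    intro t
    have h1 : (t+1)*B = B + t*B := by ring
    have h2 : m*B+1+t*B = (m+t)*B+1 := by ring
    simp only [hAdef, hLdef, hQdef]
    rw [h1, Nat.add_comm B (t*B), ← List.range'_append_1, h2, List.map_append, List.prod_append]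
  have hedge : ∀ t a b,
      (∃ k ∈ Finset.Icc ((m+t)*B+1) ((m+t+1)*B), 0 < P k a b) → 0 < Q t a b := by
    intro t a b ⟨k, hk, hP⟩
    rw [Finset.mem_Icc] at hk
    set w := (m+t)*B+1 with hwdef
    have hub : (m+t+1)*B = w + B - 1 := by rw [hwdef]; ring_nf; omega
    have hkw : w ≤ k := hk.1
    have hkB : k < w + B := by omega
    set d := k - w with hddef
    set e := B - d - 1 with hedef
    have hB' : B = e + 1 + d := by omega
    have hwd : w + d = k := by omega
    have hr : List.range' w B = List.range' w d ++ k :: List.range' (k+1) e := by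
      conv_lhs => rw [hB']
      rw [Nat.add_comm (e+1) d, ← List.range'_append_1, hwd, List.range'_succ]
    have hQt : Q t = (((List.range' w d).map P).prod) *
        (P k * (((List.range' (k+1) e).map P).prod)) := by
      simp only [hQdef]
      rw [← hwdef, hr, List.map_append, List.prod_append, List.map_cons, List.prod_cons]
    have h1k : 1 ≤ k := by omega
    have hA1nn := Stmt7Aux.prod_nonneg ((List.range' w d).map P) (hNNL _ _ (Nat.le_add_left 1 _))
    have hA2nn := Stmt7Aux.prod_nonneg ((List.range' (k+1) e).map P) (hNNL _ _ (by omega))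
    have hA1d := Stmt7Aux.prod_diag_pos ((List.range' w d).map P)
      (hNNL _ _ (Nat.le_add_left 1 _)) (hDPL _ _ (Nat.le_add_left 1 _))
    have hA2d := Stmt7Aux.prod_diag_pos ((List.range' (k+1) e).map P)
      (hNNL _ _ (by omega)) (hDPL _ _ (by omega))
    have hPknn : ∀ a b, 0 ≤ P k a b := hPnn k h1k
    have step1 : P k a b * ((List.range' (k+1) e).map P).prod b b
        ≤ (P k * ((List.range' (k+1) e).map P).prod) a b :=
      Stmt7Aux.entry_mul_le _ _ hPknn hA2nn a b b
    have hmidnn : ∀ a b, 0 ≤ (P k * ((List.range' (k+1) e).map P).prod) a b := by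
      intro a b
      rw [Matrix.mul_apply]
      exact Finset.sum_nonneg fun l _ => mul_nonneg (hPknn a l) (hA2nn l b)
    have step2 := Stmt7Aux.entry_mul_le _ _ hA1nn hmidnn a a b
    rw [hQt]
    calc (0:ℝ) < ((List.range' w d).map P).prod a a *
            (P k a b * ((List.range' (k+1) e).map P).prod b b) :=
          mul_pos (hA1d a) (mul_pos hP (hA2d b))
      _ ≤ ((List.range' w d).map P).prod a a *
            (P k * ((List.range' (k+1) e).map P).prod) a b :=
          mul_le_mul_of_nonneg_left step1 (hA1nn a a)
      _ ≤ _ := step2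
  set S : ℕ → Finset (Fin N) := fun t => Finset.univ.filter (fun x => 0 < A t i x) with hSdef
  have hmemS : ∀ t x, x ∈ S t ↔ 0 < A t i x := by
    intro t x; simp [hSdef]
  have hmono : ∀ t, S t ⊆ S (t+1) := by
    intro t x hx
    rw [hmemS] at hx ⊢
    calc (0:ℝ) < A t i x * Q t x x := mul_pos hx (hdQ t x)
      _ ≤ (A t * Q t) i x := Stmt7Aux.entry_mul_le _ _ (hnnA t) (hnnQ t) i x x
      _ = A (t+1) i x := by rw [hsplit t]
  have hiS : ∀ t, i ∈ S t := by
    intro t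
    induction t with
    | zero =>
      rw [hmemS]
      simp only [hAdef, hLdef, Nat.zero_mul, List.range'_zero, List.map_nil, List.prod_nil]
      simp [Matrix.one_apply]
    | succ t ih => exact hmono t ih
  have hstep : ∀ t x y, x ∈ S t →
      (∃ k ∈ Finset.Icc ((m+t)*B+1) ((m+t+1)*B), 0 < P k x y) → y ∈ S (t+1) := by
    intro t x y hx he
    rw [hmemS] at hx ⊢
    calc (0:ℝ) < A t i x * Q t x y := mul_pos hx (hedge t x y he)
      _ ≤ (A t * Q t) i y := Stmt7Aux.entry_mul_le _ _ (hnnA t) (hnnQ t) i x y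
      _ = A (t+1) i y := by rw [hsplit t]
  have hgrow : ∀ t, S t ≠ Finset.univ → S t ⊂ S (t+1) := by
    intro t hne
    obtain ⟨c, hc⟩ : ∃ c, c ∉ S t := by
      by_contra hall
      push_neg at hall
      exact hne (Finset.eq_univ_iff_forall.2 hall)
    obtain ⟨x, hx, y, hy, hR⟩ := Stmt7Aux.crossing (hconn (m+t) i c) (hiS t) hc
    refine Finset.ssubset_iff_of_subset (hmono t) |>.2 ⟨y, ?_, hy⟩
    exact hstep t x y hx hR
  have hcard : ∀ t, t + 1 ≤ (S t).card ∨ S t = Finset.univ := by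
    intro t
    induction t with
    | zero => exact Or.inl (Finset.card_pos.2 ⟨i, hiS 0⟩)
    | succ t ih =>
      rcases ih with h | h
      · by_cases hu : S t = Finset.univ
        · exact Or.inr (Finset.univ_subset_iff.1 (hu ▸ hmono t))
        · exact Or.inl (by have := Finset.card_lt_card (hgrow t hu); omega)
      · exact Or.inr (Finset.univ_subset_iff.1 (h ▸ hmono t))
  have hSn : S n = Finset.univ := by
    rcases hcard n with h | h
    · have h1 : (S n).card ≤ N := by
        have := Finset.card_le_univ (S n)
        simpa using this
      omega
    · exact h
  have hpos : 0 < A n i j := by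
    rw [← hmemS, hSn]; exact Finset.mem_univ j
  have hPhiA : Phi ((m+n)*B) (m*B+1) = A n := by
    have h3 : (m+n)*B + 1 - (m*B+1) = n*B := by
      have h4 : (m+n)*B = m*B + n*B := by ring
      omega
    simp only [hPhi, h3, hAdef, hLdef]
  rw [hPhiA]
  have hlen : (L n).length = n * B := by
    rw [hLdef]; simp
  have := Stmt7Aux.prod_entry_lb β hβ0' (L n) (hNNL _ _ hms) (hLBL _ _ hms) i j hpos.ne'
  rwa [hlen] at this
end

section
/- For all integers 1 ≤ s ≤ k and all indices i, j ∈ {1,…,N}, the entries of the product of consensus matrices satisfy | 1/N − (Φ_{k:s})_{ij} | ≤ 2·(1 + β^{−NB})/(1 − β^{NB}) · (1 − β^{NB})^{(k−s)/(NB)}. (Lemma 2 of the paper, from Nedić–Ozdaglar.) -/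
open Finset Matrix

section NOAux

variable {N : ℕ} {P : ℕ → Matrix (Fin N) (Fin N) ℝ} {β : ℝ}

/-- product `P a * P (a+1) * ... * P (a+b-1)` -/
def NOprod (P : ℕ → Matrix (Fin N) (Fin N) ℝ) (a b : ℕ) : Matrix (Fin N) (Fin N) ℝ :=
  ((List.range' a b).map P).prod

lemma NOprod_zero (a : ℕ) : NOprod P a 0 = 1 := rfl

lemma NOprod_succ (a b : ℕ) : NOprod P a (b + 1) = NOprod P a b * P (a + b) := by
  unfold NOprod
  rw [List.range'_concat, List.map_append, List.prod_append]
  simp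

lemma NOprod_add (a b c : ℕ) : NOprod P a (b + c) = NOprod P a b * NOprod P (a + b) c := by
  unfold NOprod
  rw [← List.range'_append_1, List.map_append, List.prod_append]

lemma NOprod_nonneg (hPnn : ∀ k, 1 ≤ k → ∀ i j, 0 ≤ P k i j)
    {a : ℕ} (ha : 1 ≤ a) (b : ℕ) : ∀ i j, 0 ≤ NOprod P a b i j := by
  induction b with
  | zero => intro i j; rw [NOprod_zero]; by_cases h : i = j <;> simp [Matrix.one_apply, h]
  | succ b ih =>
    intro i j
    rw [NOprod_succ, Matrix.mul_apply]
    exact Finset.sum_nonneg fun v _ => mul_nonneg (ih i v) (hPnn (a + b) (by omega) v j)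

lemma NOprod_row (hProw : ∀ k, 1 ≤ k → ∀ i, ∑ j, P k i j = 1)
    {a : ℕ} (ha : 1 ≤ a) (b : ℕ) : ∀ i, ∑ j, NOprod P a b i j = 1 := by
  induction b with
  | zero => intro i; simp [NOprod_zero, Matrix.one_apply]
  | succ b ih =>
    intro i
    simp only [NOprod_succ, Matrix.mul_apply]
    rw [Finset.sum_comm]
    have h : ∀ v : Fin N, ∑ j, NOprod P a b i v * P (a + b) v j = NOprod P a b i v := by
      intro v; rw [← Finset.mul_sum, hProw (a + b) (by omega) v, mul_one]
    rw [Finset.sum_congr rfl fun v _ => h v, ih i]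

lemma NOprod_col (hPcol : ∀ k, 1 ≤ k → ∀ j, ∑ i, P k i j = 1)
    {a : ℕ} (ha : 1 ≤ a) (b : ℕ) : ∀ j, ∑ i, NOprod P a b i j = 1 := by
  induction b with
  | zero => intro j; simp [NOprod_zero, Matrix.one_apply]
  | succ b ih =>
    intro j
    simp only [NOprod_succ, Matrix.mul_apply]
    rw [Finset.sum_comm]
    have h : ∀ v : Fin N, ∑ i, NOprod P a b i v * P (a + b) v j = P (a + b) v j := by
      intro v; rw [← Finset.sum_mul, ih v, one_mul]
    rw [Finset.sum_congr rfl fun v _ => h v, hPcol (a + b) (by omega) j]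

lemma NOprod_le_one (hPnn : ∀ k, 1 ≤ k → ∀ i j, 0 ≤ P k i j)
    (hProw : ∀ k, 1 ≤ k → ∀ i, ∑ j, P k i j = 1)
    {a : ℕ} (ha : 1 ≤ a) (b : ℕ) (i j : Fin N) : NOprod P a b i j ≤ 1 := by
  have h := NOprod_row hProw ha b i
  calc NOprod P a b i j ≤ ∑ j', NOprod P a b i j' :=
        Finset.single_le_sum (fun v _ => NOprod_nonneg hPnn ha b i v) (Finset.mem_univ j)
    _ = 1 := h

lemma NO_P_entry_lb (hPdiag : ∀ k, 1 ≤ k → ∀ i, β ≤ P k i i)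
    (hPoff : ∀ k, 1 ≤ k → ∀ i j, P k i j ≠ 0 → β ≤ P k i j)
    {k : ℕ} (hk : 1 ≤ k) {u v : Fin N} (h : 0 < P k u v) : β ≤ P k u v := by
  by_cases huv : u = v
  · subst huv; exact hPdiag k hk u
  · exact hPoff k hk u v (ne_of_gt h)

lemma NOprod_entry_lb (hβ0 : 0 ≤ β) (hPnn : ∀ k, 1 ≤ k → ∀ i j, 0 ≤ P k i j)
    (hPdiag : ∀ k, 1 ≤ k → ∀ i, β ≤ P k i i)
    (hPoff : ∀ k, 1 ≤ k → ∀ i j, P k i j ≠ 0 → β ≤ P k i j)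
    {a : ℕ} (ha : 1 ≤ a) (b : ℕ) :
    ∀ i j, 0 < NOprod P a b i j → β ^ b ≤ NOprod P a b i j := by
  induction b with
  | zero =>
    intro i j h
    rw [NOprod_zero] at *
    by_cases hij : i = j
    · simp [Matrix.one_apply, hij]
    · simp [Matrix.one_apply, hij] at h
  | succ b ih =>
    intro i j h
    rw [NOprod_succ, Matrix.mul_apply] at h ⊢
    have hterm : ∀ v : Fin N, 0 ≤ NOprod P a b i v * P (a + b) v j := fun v =>
      mul_nonneg (NOprod_nonneg hPnn ha b i v) (hPnn (a + b) (by omega) v j)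
    obtain ⟨v, hv⟩ : ∃ v : Fin N, 0 < NOprod P a b i v * P (a + b) v j := by
      by_contra hc
      push_neg at hc
      have hle : ∑ v : Fin N, NOprod P a b i v * P (a + b) v j ≤ 0 :=
        Finset.sum_nonpos fun v _ => hc v
      linarith
    have h1 : 0 < NOprod P a b i v := by
      rcases mul_pos_iff.mp hv with ⟨h1, _⟩ | ⟨_, h2⟩
      · exact h1
      · exact absurd (hPnn (a + b) (by omega) v j) (not_le.mpr h2)
    have h2 : 0 < P (a + b) v j := by
      rcases mul_pos_iff.mp hv with ⟨_, h2⟩ | ⟨h1', _⟩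
      · exact h2
      · exact absurd (NOprod_nonneg hPnn ha b i v) (not_le.mpr h1')
    calc β ^ (b + 1) = β ^ b * β := by ring
      _ ≤ NOprod P a b i v * P (a + b) v j :=
          mul_le_mul (ih i v h1) (NO_P_entry_lb hPdiag hPoff (by omega) h2) hβ0
            (le_of_lt h1)
      _ ≤ ∑ w : Fin N, NOprod P a b i w * P (a + b) w j :=
          Finset.single_le_sum (fun w _ => hterm w) (Finset.mem_univ v)

lemma NOprod_pos_step
    (hPnn : ∀ k, 1 ≤ k → ∀ i j, 0 ≤ P k i j)
    {a : ℕ} (ha : 1 ≤ a) {b : ℕ} {i u v : Fin N}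
    (h1 : 0 < NOprod P a b i u) (h2 : 0 < P (a + b) u v) :
    0 < NOprod P a (b + 1) i v := by
  rw [NOprod_succ, Matrix.mul_apply]
  exact Finset.sum_pos'
    (fun w _ => mul_nonneg (NOprod_nonneg hPnn ha b i w) (hPnn (a + b) (by omega) w v))
    ⟨u, Finset.mem_univ u, mul_pos h1 h2⟩

lemma NOprod_pos_mono (hβ0 : 0 < β)
    (hPnn : ∀ k, 1 ≤ k → ∀ i j, 0 ≤ P k i j)
    (hPdiag : ∀ k, 1 ≤ k → ∀ i, β ≤ P k i i)
    {a : ℕ} (ha : 1 ≤ a) {b b' : ℕ} (hbb : b ≤ b') {i j : Fin N}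
    (h : 0 < NOprod P a b i j) : 0 < NOprod P a b' i j := by
  induction b' with
  | zero => exact (Nat.le_zero.mp hbb) ▸ h
  | succ b' ih =>
    rcases Nat.lt_or_ge b (b' + 1) with hlt | hge
    · have hb' : 0 < NOprod P a b' i j := ih (by omega)
      exact NOprod_pos_step hPnn ha hb'
        (lt_of_lt_of_le hβ0 (hPdiag (a + b') (by omega) j))
    · have hb : b = b' + 1 := by omega
      exact hb ▸ h

lemma NOprod_diag_pos (hβ0 : 0 < β)
    (hPnn : ∀ k, 1 ≤ k → ∀ i j, 0 ≤ P k i j)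
    (hPdiag : ∀ k, 1 ≤ k → ∀ i, β ≤ P k i i)
    {a : ℕ} (ha : 1 ≤ a) (b : ℕ) (i : Fin N) : 0 < NOprod P a b i i := by
  have h0 : 0 < NOprod P a 0 i i := by rw [NOprod_zero]; simp [Matrix.one_apply]
  exact NOprod_pos_mono hβ0 hPnn hPdiag ha (Nat.zero_le b) h0

lemma NO_exists_crossing {α : Type*} {r : α → α → Prop} {S : Finset α} :
    ∀ {i j : α}, Relation.ReflTransGen r i j → i ∈ S → j ∉ S →
      ∃ u ∈ S, ∃ v, v ∉ S ∧ r u v := by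
  intro i j h
  induction h with
  | refl => intro hi hj; exact absurd hi hj
  | @tail b c hb hbc ih =>
    intro hi hj
    by_cases hbS : b ∈ S
    · exact ⟨b, hbS, c, hj, hbc⟩
    · exact ih hi hbS

lemma NOprod_block_pos {B : ℕ} (hN : 2 ≤ N) (hB : 1 ≤ B) (hβ0 : 0 < β)
    (hPnn : ∀ k, 1 ≤ k → ∀ i j, 0 ≤ P k i j)
    (hPdiag : ∀ k, 1 ≤ k → ∀ i, β ≤ P k i i)
    (hconn : ∀ m : ℕ, ∀ i j : Fin N,
      Relation.ReflTransGen
        (fun a b => ∃ k ∈ Finset.Icc (m * B + 1) ((m + 1) * B), 0 < P k a b) i j)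
    {t : ℕ} (ht : 1 ≤ t) : ∀ i j, 0 < NOprod P t (N * B) i j := by
  classical
  intro i j
  set pos : ℕ → Finset (Fin N) :=
    fun L => Finset.univ.filter (fun v => 0 < NOprod P t L i v) with hposdef
  have hmem : ∀ (L : ℕ) (v : Fin N), v ∈ pos L ↔ 0 < NOprod P t L i v := by
    intro L v; simp [hposdef]
  have hmono : ∀ {L L' : ℕ}, L ≤ L' → pos L ⊆ pos L' := by
    intro L L' hLL v hv
    exact (hmem L' v).mpr (NOprod_pos_mono hβ0 hPnn hPdiag ht hLL ((hmem L v).mp hv))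
  have hi0 : ∀ L, i ∈ pos L := fun L =>
    (hmem L i).mpr (NOprod_diag_pos hβ0 hPnn hPdiag ht L i)
  obtain ⟨m0, hm0a, hm0b⟩ : ∃ m0 : ℕ, t ≤ m0 * B + 1 ∧ m0 * B + 1 ≤ t + B - 1 := by
    have hdm : B * ((t - 1) / B) + (t - 1) % B = t - 1 := Nat.div_add_mod (t - 1) B
    have hrB : (t - 1) % B < B := Nat.mod_lt _ (by omega)
    by_cases hr : (t - 1) % B = 0
    · refine ⟨(t - 1) / B, ?_, ?_⟩ <;>
      · have h1 : (t - 1) / B * B = B * ((t - 1) / B) := Nat.mul_comm _ _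
        omega
    · refine ⟨(t - 1) / B + 1, ?_, ?_⟩ <;>
      · have h1 : ((t - 1) / B + 1) * B = B * ((t - 1) / B) + B := by ring
        omega
  set off := m0 * B + 1 - t with hoff
  have hgrow : ∀ c : ℕ, pos (off + c * B) ≠ Finset.univ →
      (pos (off + c * B)).card + 1 ≤ (pos (off + (c + 1) * B)).card := by
    intro c hne
    have e1 : (m0 + c) * B = m0 * B + c * B := by ring
    have e2 : (m0 + c + 1) * B = m0 * B + c * B + B := by ring
    have e3 : (c + 1) * B = c * B + B := by ring
    obtain ⟨y, hy⟩ : ∃ y, y ∉ pos (off + c * B) := by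
      by_contra h; push_neg at h; exact hne (Finset.eq_univ_iff_forall.mpr h)
    obtain ⟨u, huS, v, hvS, hr⟩ := NO_exists_crossing (hconn (m0 + c) i y) (hi0 _) hy
    obtain ⟨k, hk, hPk⟩ := hr
    rw [Finset.mem_Icc] at hk
    have hkt : t ≤ k := by omega
    have hL1 : off + c * B ≤ k - t := by omega
    have hL2 : k - t + 1 ≤ off + (c + 1) * B := by omega
    have hu' : u ∈ pos (k - t) := hmono hL1 huS
    have hv' : v ∈ pos (k - t + 1) := by
      refine (hmem _ v).mpr (NOprod_pos_step hPnn ht ((hmem _ u).mp hu') ?_)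
      rw [show t + (k - t) = k by omega]
      exact hPk
    have hsub : pos (off + c * B) ⊆ pos (off + (c + 1) * B) := hmono (by omega)
    have hss : pos (off + c * B) ⊂ pos (off + (c + 1) * B) :=
      (Finset.ssubset_iff_of_subset hsub).mpr ⟨v, hmono hL2 hv', hvS⟩
    exact Finset.card_lt_card hss
  have hcard : ∀ c : ℕ, min (c + 1) N ≤ (pos (off + c * B)).card := by
    intro c
    induction c with
    | zero =>
      have h1 : 0 < (pos (off + 0 * B)).card := Finset.card_pos.mpr ⟨i, hi0 _⟩
      omega
    | succ c ih =>
      by_cases hu : pos (off + c * B) = Finset.univ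
      · have hle : off + c * B ≤ off + (c + 1) * B := by
          have e3 : (c + 1) * B = c * B + B := by ring
          omega
        have h2 : pos (off + (c + 1) * B) = Finset.univ :=
          Finset.univ_subset_iff.mp (hu ▸ hmono hle)
        have h3 : (pos (off + (c + 1) * B)).card = N := by
          rw [h2, Finset.card_univ, Fintype.card_fin]
        omega
      · have := hgrow c hu
        omega
  have hNle : N ≤ (pos (off + (N - 1) * B)).card := by
    have h1 := hcard (N - 1)
    have h2 : min (N - 1 + 1) N = N := by omega
    omega
  have huniv : pos (off + (N - 1) * B) = Finset.univ := by
    apply Finset.eq_univ_of_card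
    have h2 : (pos (off + (N - 1) * B)).card ≤ N := by
      have := Finset.card_le_univ (pos (off + (N - 1) * B))
      simpa using this
    rw [Fintype.card_fin]
    omega
  have hfin : off + (N - 1) * B ≤ N * B := by
    obtain ⟨M, hM⟩ : ∃ M : ℕ, N = M + 1 := ⟨N - 1, by omega⟩
    have e2 : N - 1 = M := by omega
    rw [e2, hM]
    have e : (M + 1) * B = M * B + B := by ring
    omega
  have hj : j ∈ pos (N * B) := hmono hfin (huniv ▸ Finset.mem_univ j)
  exact (hmem _ j).mp hj

lemma NO_osc_contract {n : ℕ} (hne : (Finset.univ : Finset (Fin n)).Nonempty)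
    (A : Matrix (Fin n) (Fin n) ℝ) (v : Fin n → ℝ) {δ : ℝ} (hδ0 : 0 ≤ δ)
    (hA : ∀ i l, δ ≤ A i l) (hrow : ∀ i, ∑ l, A i l = 1) :
    Finset.univ.sup' hne (fun i => ∑ l, A i l * v l)
        - Finset.univ.inf' hne (fun i => ∑ l, A i l * v l)
      ≤ (1 - δ) * (Finset.univ.sup' hne v - Finset.univ.inf' hne v) := by
  set S := Finset.univ.sup' hne v with hS
  set I := Finset.univ.inf' hne v with hI
  have hub : ∀ l : Fin n, v l ≤ S := fun l => Finset.le_sup' v (Finset.mem_univ l)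
  have hlb : ∀ l : Fin n, I ≤ v l := fun l => Finset.inf'_le v (Finset.mem_univ l)
  obtain ⟨x, -⟩ := hne.exists_mem
  have hIS : I ≤ S := (hlb x).trans (hub x)
  have hAnn : ∀ i l, 0 ≤ A i l := fun i l => le_trans hδ0 (hA i l)
  have hsum : ∀ (i : Fin n) (c : ℝ), ∑ l, A i l * c = c := by
    intro i c; rw [← Finset.sum_mul, hrow i, one_mul]
  have hup : ∀ i, ∑ l, A i l * v l ≤ S - δ * (S - I) := by
    intro i
    obtain ⟨l0, -, hl0⟩ := Finset.exists_mem_eq_inf' hne v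
    have h1 : A i l0 * (S - v l0) ≤ ∑ l, A i l * (S - v l) :=
      Finset.single_le_sum (f := fun l => A i l * (S - v l))
        (fun l _ => mul_nonneg (hAnn i l) (by linarith [hub l])) (Finset.mem_univ l0)
    have h2 : ∑ l, A i l * (S - v l) = S - ∑ l, A i l * v l := by
      simp only [mul_sub, Finset.sum_sub_distrib, hsum i S]
    have h3 : δ * (S - I) ≤ A i l0 * (S - v l0) := by
      rw [← hl0]
      exact mul_le_mul_of_nonneg_right (hA i l0) (by linarith)
    linarith
  have hdown : ∀ i, I + δ * (S - I) ≤ ∑ l, A i l * v l := by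
    intro i
    obtain ⟨l1, -, hl1⟩ := Finset.exists_mem_eq_sup' hne v
    have h1 : A i l1 * (v l1 - I) ≤ ∑ l, A i l * (v l - I) :=
      Finset.single_le_sum (f := fun l => A i l * (v l - I))
        (fun l _ => mul_nonneg (hAnn i l) (by linarith [hlb l])) (Finset.mem_univ l1)
    have h2 : ∑ l, A i l * (v l - I) = (∑ l, A i l * v l) - I := by
      simp only [mul_sub, Finset.sum_sub_distrib, hsum i I]
    have h3 : δ * (S - I) ≤ A i l1 * (v l1 - I) := by
      rw [← hl1]
      exact mul_le_mul_of_nonneg_right (hA i l1) (by linarith)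
    linarith
  have hsup : Finset.univ.sup' hne (fun i => ∑ l, A i l * v l) ≤ S - δ * (S - I) :=
    Finset.sup'_le hne _ (fun i _ => hup i)
  have hinf : I + δ * (S - I) ≤ Finset.univ.inf' hne (fun i => ∑ l, A i l * v l) :=
    Finset.le_inf' hne _ (fun i _ => hdown i)
  have hδSI : 0 ≤ δ * (S - I) := mul_nonneg hδ0 (by linarith)
  linarith

end NOAux
/-- Nedić–Ozdaglar geometric-mixing bound: under the doubly stochastic,
`β`-bounded-entries and `B`-bounded-connectivity assumptions, for all `1 ≤ s ≤ k` and
all indices `i j`, `|1/N − (Φ_{k:s})_{ij}| ≤ 2(1+β^{−NB})/(1−β^{NB})·(1−β^{NB})^{(k−s)/(NB)}`. -/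
theorem stmt8 (N B : ℕ) (hN : 2 ≤ N) (hB : 1 ≤ B)
    (β : ℝ) (hβ0 : 0 < β) (hβ1 : β < 1)
    (P : ℕ → Matrix (Fin N) (Fin N) ℝ)
    (hPnn : ∀ k, 1 ≤ k → ∀ i j, 0 ≤ P k i j)
    (hProw : ∀ k, 1 ≤ k → ∀ i, ∑ j, P k i j = 1)
    (hPcol : ∀ k, 1 ≤ k → ∀ j, ∑ i, P k i j = 1)
    (hPdiag : ∀ k, 1 ≤ k → ∀ i, β ≤ P k i i)
    (hPoff : ∀ k, 1 ≤ k → ∀ i j, P k i j ≠ 0 → β ≤ P k i j)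
    (hconn : ∀ m : ℕ, ∀ i j : Fin N,
      Relation.ReflTransGen
        (fun a b => ∃ k ∈ Finset.Icc (m * B + 1) ((m + 1) * B), 0 < P k a b) i j)
    (Phi : ℕ → ℕ → Matrix (Fin N) (Fin N) ℝ)
    (hPhi : ∀ k s, Phi k s = ((List.range' s (k + 1 - s)).map P).prod) :
    ∀ s k : ℕ, 1 ≤ s → s ≤ k → ∀ i j : Fin N,
      |1 / (N : ℝ) - Phi k s i j| ≤
        2 * (1 + β ^ (-(N * B : ℝ))) / (1 - β ^ (N * B)) *
          (1 - β ^ (N * B)) ^ (((k : ℝ) - (s : ℝ)) / (N * B)) := by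
  intro s k hs hsk i j
  have hNB : 1 ≤ N * B := by
    have := Nat.mul_le_mul hN hB
    omega
  set δ : ℝ := β ^ (N * B) with hδdef
  have hδ0 : 0 < δ := pow_pos hβ0 _
  have hδ1 : δ < 1 := pow_lt_one₀ (le_of_lt hβ0) hβ1 (by omega)
  set q : ℝ := 1 - δ with hqdef
  have hq0 : 0 < q := by simp only [hqdef]; linarith
  have hq1 : q < 1 := by simp only [hqdef]; linarith
  have hne : (Finset.univ : Finset (Fin N)).Nonempty :=
    ⟨⟨0, by omega⟩, Finset.mem_univ _⟩
  set F : ℕ → Fin N → ℝ := fun u a => NOprod P u (k + 1 - u) a j with hFdef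
  have hPhiF : Phi k s i j = F s i := by rw [hPhi]; rfl
  have hblock : ∀ t, 1 ≤ t → ∀ a b, δ ≤ NOprod P t (N * B) a b := fun t ht a b =>
    NOprod_entry_lb (le_of_lt hβ0) hPnn hPdiag hPoff ht _ a b
      (NOprod_block_pos hN hB hβ0 hPnn hPdiag hconn ht a b)
  -- contraction chain
  have chain : ∀ (n : ℕ) (u : ℕ), 1 ≤ u → u + n * (N * B) ≤ k + 1 →
      Finset.univ.sup' hne (F u) - Finset.univ.inf' hne (F u) ≤
        q ^ n * (Finset.univ.sup' hne (F (u + n * (N * B)))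
          - Finset.univ.inf' hne (F (u + n * (N * B)))) := by
    intro n
    induction n with
    | zero => intro u hu hub; simp
    | succ n ih =>
      intro u hu hub
      have e : (n + 1) * (N * B) = n * (N * B) + N * B := by ring
      have hub' : u + N * B ≤ k + 1 := by omega
      have hsplit : k + 1 - u = N * B + (k + 1 - (u + N * B)) := by omega
      have hFu : ∀ a, F u a = ∑ l, NOprod P u (N * B) a l * F (u + N * B) l := by
        intro a
        show NOprod P u (k + 1 - u) a j = _
        rw [hsplit, NOprod_add, Matrix.mul_apply]
      have hfun : (fun a => ∑ l, NOprod P u (N * B) a l * F (u + N * B) l) = F u :=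
        funext fun a => (hFu a).symm
      have hstep1 := NO_osc_contract hne (NOprod P u (N * B)) (F (u + N * B))
        (le_of_lt hδ0) (hblock u hu) (NOprod_row hProw hu _)
      rw [hfun] at hstep1
      have ih' := ih (u + N * B) (by omega) (by omega)
      have e2 : u + N * B + n * (N * B) = u + (n + 1) * (N * B) := by ring
      rw [e2] at ih'
      have hqn : (0:ℝ) ≤ q ^ n := le_of_lt (pow_pos hq0 n)
      calc Finset.univ.sup' hne (F u) - Finset.univ.inf' hne (F u)
          ≤ q * (Finset.univ.sup' hne (F (u + N * B))
              - Finset.univ.inf' hne (F (u + N * B))) := hstep1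
        _ ≤ q * (q ^ n * (Finset.univ.sup' hne (F (u + (n + 1) * (N * B)))
              - Finset.univ.inf' hne (F (u + (n + 1) * (N * B))))) :=
            mul_le_mul_of_nonneg_left ih' (le_of_lt hq0)
        _ = q ^ (n + 1) * (Finset.univ.sup' hne (F (u + (n + 1) * (N * B)))
              - Finset.univ.inf' hne (F (u + (n + 1) * (N * B)))) := by ring
  set n : ℕ := (k - s) / (N * B) with hndef
  have hnle : s + n * (N * B) ≤ k + 1 := by
    rw [hndef]
    have := Nat.div_mul_le_self (k - s) (N * B)
    omega
  have hosc := chain n s hs hnle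
  set e := s + n * (N * B) with hedef
  have hend : Finset.univ.sup' hne (F e) - Finset.univ.inf' hne (F e) ≤ 1 := by
    have h1 : Finset.univ.sup' hne (F e) ≤ 1 :=
      Finset.sup'_le hne _ (fun a _ => NOprod_le_one hPnn hProw (by omega) _ a j)
    have h2 : (0:ℝ) ≤ Finset.univ.inf' hne (F e) :=
      Finset.le_inf' hne _ (fun a _ => NOprod_nonneg hPnn (by omega) _ a j)
    linarith
  -- center: inf ≤ 1/N ≤ sup
  have hNr : (0:ℝ) < (N : ℝ) := by positivity
  have hcol : ∑ a, F s a = 1 := NOprod_col hPcol hs _ j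
  have hsum_sup : (1:ℝ) ≤ (N : ℝ) * Finset.univ.sup' hne (F s) := by
    have h1 : ∑ a, F s a ≤ ∑ _a : Fin N, Finset.univ.sup' hne (F s) :=
      Finset.sum_le_sum fun a _ => Finset.le_sup' (F s) (Finset.mem_univ a)
    rw [hcol, Finset.sum_const, Finset.card_univ, Fintype.card_fin,
      nsmul_eq_mul] at h1
    exact h1
  have hsum_inf : (N : ℝ) * Finset.univ.inf' hne (F s) ≤ 1 := by
    have h1 : ∑ _a : Fin N, Finset.univ.inf' hne (F s) ≤ ∑ a, F s a :=
      Finset.sum_le_sum fun a _ => Finset.inf'_le (F s) (Finset.mem_univ a)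
    rw [hcol, Finset.sum_const, Finset.card_univ, Fintype.card_fin,
      nsmul_eq_mul] at h1
    exact h1
  have habs : |1 / (N : ℝ) - F s i| ≤
      Finset.univ.sup' hne (F s) - Finset.univ.inf' hne (F s) := by
    have h1 : Finset.univ.inf' hne (F s) ≤ F s i :=
      Finset.inf'_le (F s) (Finset.mem_univ i)
    have h2 : F s i ≤ Finset.univ.sup' hne (F s) :=
      Finset.le_sup' (F s) (Finset.mem_univ i)
    have h3 : Finset.univ.inf' hne (F s) ≤ 1 / (N : ℝ) := by
      rw [le_div_iff₀ hNr]
      linarith [hsum_inf]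
    have h4 : 1 / (N : ℝ) ≤ Finset.univ.sup' hne (F s) := by
      rw [div_le_iff₀ hNr]
      linarith [hsum_sup]
    rw [abs_le]
    constructor <;> linarith
  have hkey : |1 / (N : ℝ) - Phi k s i j| ≤ q ^ n := by
    rw [hPhiF]
    have hqn : (0:ℝ) ≤ q ^ n := le_of_lt (pow_pos hq0 n)
    calc |1 / (N : ℝ) - F s i|
        ≤ Finset.univ.sup' hne (F s) - Finset.univ.inf' hne (F s) := habs
      _ ≤ q ^ n * (Finset.univ.sup' hne (F e) - Finset.univ.inf' hne (F e)) := hosc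
      _ ≤ q ^ n * 1 := mul_le_mul_of_nonneg_left hend hqn
      _ = q ^ n := mul_one _
  -- numeric comparison with the RHS
  set x : ℝ := ((k : ℝ) - (s : ℝ)) / ((N : ℝ) * (B : ℝ)) with hxdef
  have hMr : (0:ℝ) < (N : ℝ) * (B : ℝ) := by
    have : (0:ℝ) < (B : ℝ) := by positivity
    positivity
  have hxn : x - 1 ≤ (n : ℝ) := by
    have hlt : k - s < (n + 1) * (N * B) := by
      rw [hndef]
      have hdm := Nat.div_add_mod (k - s) (N * B)
      have hmod : (k - s) % (N * B) < N * B := Nat.mod_lt _ (by omega)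
      have e : ((k - s) / (N * B) + 1) * (N * B) = (N * B) * ((k - s) / (N * B)) + N * B := by
        ring
      omega
    have hcast : ((k : ℝ) - (s : ℝ)) = ((k - s : ℕ) : ℝ) := by
      rw [Nat.cast_sub hsk]
    have hlt' : ((k - s : ℕ) : ℝ) < ((n : ℝ) + 1) * ((N : ℝ) * (B : ℝ)) := by
      have := hlt
      push_cast
      exact_mod_cast this
    have hx1 : x < (n : ℝ) + 1 := by
      rw [hxdef, hcast, div_lt_iff₀ hMr]
      exact hlt'
    linarith
  have hrn : q ^ n = q ^ ((n : ℕ) : ℝ) := (Real.rpow_natCast q n).symm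
  have hstep2 : q ^ ((n : ℕ) : ℝ) ≤ q ^ (x - 1) :=
    Real.rpow_le_rpow_of_exponent_ge hq0 (le_of_lt hq1) hxn
  have hstep3 : q ^ (x - 1) = q ^ x / q := by
    rw [Real.rpow_sub hq0, Real.rpow_one]
  have hqx : (0:ℝ) < q ^ x := Real.rpow_pos_of_pos hq0 x
  have ht : (0:ℝ) < β ^ (-((N : ℝ) * (B : ℝ))) := Real.rpow_pos_of_pos hβ0 _
  have hfinal : q ^ x / q ≤ 2 * (1 + β ^ (-((N : ℝ) * (B : ℝ)))) / q * q ^ x := by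
    have hD : (1:ℝ) ≤ 2 * (1 + β ^ (-((N : ℝ) * (B : ℝ)))) := by linarith
    calc q ^ x / q ≤ (2 * (1 + β ^ (-((N : ℝ) * (B : ℝ)))) * q ^ x) / q := by
          gcongr
          nlinarith
      _ = 2 * (1 + β ^ (-((N : ℝ) * (B : ℝ)))) / q * q ^ x := by ring
  calc |1 / (N : ℝ) - Phi k s i j| ≤ q ^ n := hkey
    _ = q ^ ((n : ℕ) : ℝ) := hrn
    _ ≤ q ^ (x - 1) := hstep2
    _ = q ^ x / q := hstep3
    _ ≤ 2 * (1 + β ^ (-((N : ℝ) * (B : ℝ)))) / q * q ^ x := hfinal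
end

section
/- For every fixed s ≥ 1, every entry (Φ_{k:s})_{ij} of the product of consensus matrices converges to 1/N as k → ∞; that is, Φ_{k:s} converges entrywise to the doubly stochastic limit matrix (1/N)·1·1ᵀ, where 1 ∈ ℝ^N is the all-ones vector. (Lemma 1 of the paper, from Boyd et al.) -/
namespace Stmt9Aux
open Finset

variable {N : ℕ}

/-- Doubly stochastic, positive diagonal, nonzero entries ≥ β^L. -/
def Nice (β : ℝ) (L : ℕ) (A : Matrix (Fin N) (Fin N) ℝ) : Prop :=
  (∀ i j, 0 ≤ A i j) ∧ (∀ i, ∑ j, A i j = 1) ∧ (∀ j, ∑ i, A i j = 1) ∧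
    (∀ i, 0 < A i i) ∧ (∀ i j, A i j ≠ 0 → β ^ L ≤ A i j)

lemma nice_one {β : ℝ} : Nice β 0 (1 : Matrix (Fin N) (Fin N) ℝ) := by
  refine ⟨?_, ?_, ?_, ?_, ?_⟩
  · intro i j; by_cases h : i = j <;> simp [Matrix.one_apply, h]
  · intro i; simp [Matrix.one_apply]
  · intro j; simp [Matrix.one_apply]
  · intro i; simp
  · intro i j h
    by_cases hij : i = j
    · simp [Matrix.one_apply, hij]
    · simp [Matrix.one_apply, hij] at h

lemma mul_entry_le {A B : Matrix (Fin N) (Fin N) ℝ} (hA : ∀ i j, 0 ≤ A i j)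
    (hB : ∀ i j, 0 ≤ B i j) (i l j : Fin N) : A i l * B l j ≤ (A * B) i j := by
  rw [Matrix.mul_apply]
  exact Finset.single_le_sum (fun x _ => mul_nonneg (hA i x) (hB x j)) (Finset.mem_univ l)

lemma nice_mul {β : ℝ} (hβ : 0 < β) {L1 L2 : ℕ} {A B : Matrix (Fin N) (Fin N) ℝ}
    (hA : Nice β L1 A) (hB : Nice β L2 B) : Nice β (L1 + L2) (A * B) := by
  obtain ⟨hA0, hAr, hAc, hAd, hAl⟩ := hA
  obtain ⟨hB0, hBr, hBc, hBd, hBl⟩ := hB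
  refine ⟨?_, ?_, ?_, ?_, ?_⟩
  · intro i j; rw [Matrix.mul_apply]
    exact Finset.sum_nonneg fun l _ => mul_nonneg (hA0 i l) (hB0 l j)
  · intro i
    simp only [Matrix.mul_apply]
    rw [Finset.sum_comm]
    simp only [← Finset.mul_sum, hBr]
    simpa using hAr i
  · intro j
    simp only [Matrix.mul_apply]
    rw [Finset.sum_comm]
    simp only [← Finset.sum_mul, hAc, one_mul]
    exact hBc j
  · intro i
    calc (0:ℝ) < A i i * B i i := mul_pos (hAd i) (hBd i)
      _ ≤ (A * B) i i := mul_entry_le hA0 hB0 i i i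
  · intro i j h
    rw [Matrix.mul_apply] at h
    have : ∃ l, A i l * B l j ≠ 0 := by
      by_contra hc
      push_neg at hc
      exact h (Finset.sum_eq_zero fun l _ => hc l)
    obtain ⟨l, hl⟩ := this
    have h1 : A i l ≠ 0 := fun h0 => hl (by simp [h0])
    have h2 : B l j ≠ 0 := fun h0 => hl (by simp [h0])
    calc β ^ (L1 + L2) = β ^ L1 * β ^ L2 := pow_add β L1 L2
      _ ≤ A i l * B l j := by
          apply mul_le_mul (hAl i l h1) (hBl l j h2) (le_of_lt (pow_pos hβ L2))
          exact hA0 i l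
      _ ≤ (A * B) i j := mul_entry_le hA0 hB0 i l j

lemma nice_prod {β : ℝ} (hβ : 0 < β) (P : ℕ → Matrix (Fin N) (Fin N) ℝ)
    (l : List ℕ) (hl : ∀ k ∈ l, Nice β 1 (P k)) :
    Nice β l.length ((l.map P).prod) := by
  induction l with
  | nil => simpa using nice_one
  | cons a t ih =>
    simp only [List.map_cons, List.prod_cons, List.length_cons]
    have h1 := hl a (by simp)
    have h2 := ih (fun k hk => hl k (by simp [hk]))
    have h3 := nice_mul hβ h1 h2
    rw [show t.length + 1 = 1 + t.length from by omega]
    exact h3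

lemma cross {α : Type*} {r : α → α → Prop} {S : α → Prop} {i j : α}
    (h : Relation.ReflTransGen r i j) :
    S i → ¬ S j → ∃ a, S a ∧ ∃ b, ¬ S b ∧ r a b := by
  induction h with
  | refl => intro hi hj; exact absurd hi hj
  | @tail b c hib hbc ih =>
    intro hi hj
    by_cases hb : S b
    · exact ⟨b, hb, c, hj, hbc⟩
    · exact ih hi hb

lemma range'_split (a b c : ℕ) (hab : a ≤ b) (hbc : b ≤ c) :
    List.range' a (b - a) ++ List.range' b (c - b) = List.range' a (c - a) := by
  have h := @List.range'_append a (b - a) (c - b) 1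
  rw [show a + 1 * (b - a) = b from by omega, show (b - a) + (c - b) = c - a from by omega] at h
  exact h

section Sprd
variable [NeZero N]

noncomputable def sprd (x : Fin N → ℝ) : ℝ :=
  Finset.univ.sup' Finset.univ_nonempty x - Finset.univ.inf' Finset.univ_nonempty x

lemma sprd_nonneg (x : Fin N → ℝ) : 0 ≤ sprd x := by
  obtain ⟨j⟩ := (inferInstance : Nonempty (Fin N))
  have h1 : x j ≤ Finset.univ.sup' Finset.univ_nonempty x := Finset.le_sup' x (by simp)
  have h2 : Finset.univ.inf' Finset.univ_nonempty x ≤ x j := Finset.inf'_le x (by simp)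
  unfold sprd; linarith

lemma sprd_le_one {x : Fin N → ℝ} (h0 : ∀ j, 0 ≤ x j) (h1 : ∀ j, x j ≤ 1) :
    sprd x ≤ 1 := by
  have hs : Finset.univ.sup' Finset.univ_nonempty x ≤ 1 :=
    Finset.sup'_le _ _ fun j _ => h1 j
  have hi : (0:ℝ) ≤ Finset.univ.inf' Finset.univ_nonempty x :=
    Finset.le_inf' _ _ fun j _ => h0 j
  unfold sprd; linarith

/-- Contraction of spread under right-multiplication by a column-stochastic
matrix with entries ≥ η. -/
lemma sprd_contract {η : ℝ} (hη : 0 ≤ η) {A : Matrix (Fin N) (Fin N) ℝ}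
    (hA : ∀ l j, η ≤ A l j) (hcol : ∀ j, ∑ l, A l j = 1) (x : Fin N → ℝ) :
    sprd (fun j => ∑ l, x l * A l j) ≤ (1 - 2 * η) * sprd x := by
  obtain ⟨lM, -, hlM⟩ := Finset.exists_mem_eq_sup' (Finset.univ_nonempty) x
  obtain ⟨lm, -, hlm⟩ := Finset.exists_mem_eq_inf' (Finset.univ_nonempty) x
  have hxle : ∀ l, x l ≤ x lM := fun l => hlM ▸ Finset.le_sup' x (Finset.mem_univ l)
  have hxge : ∀ l, x lm ≤ x l := fun l => hlm ▸ Finset.inf'_le x (Finset.mem_univ l)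
  have key1 : ∀ j, (∑ l, x l * A l j) ≤ x lM - η * (x lM - x lm) := by
    intro j
    have e1 : x lM - (∑ l, x l * A l j) = ∑ l, A l j * (x lM - x l) := by
      have h := hcol j
      have : ∑ l, A l j * (x lM - x l) = (∑ l, A l j) * x lM - ∑ l, x l * A l j := by
        simp only [mul_sub, Finset.sum_sub_distrib, ← Finset.sum_mul]
        congr 1
        exact Finset.sum_congr rfl fun l _ => mul_comm _ _
      rw [this, h, one_mul]
    have h3 : A lm j * (x lM - x lm) ≤ ∑ l, A l j * (x lM - x l) :=
      Finset.single_le_sum (f := fun l => A l j * (x lM - x l))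
        (fun l _ => mul_nonneg (le_trans hη (hA l j)) (by linarith [hxle l]))
        (Finset.mem_univ lm)
    have h4 : η * (x lM - x lm) ≤ A lm j * (x lM - x lm) :=
      mul_le_mul_of_nonneg_right (hA lm j) (by linarith [hxge lM])
    linarith
  have key2 : ∀ j, x lm + η * (x lM - x lm) ≤ (∑ l, x l * A l j) := by
    intro j
    have e1 : (∑ l, x l * A l j) - x lm = ∑ l, A l j * (x l - x lm) := by
      have h := hcol j
      have : ∑ l, A l j * (x l - x lm) = (∑ l, x l * A l j) - (∑ l, A l j) * x lm := by
        simp only [mul_sub, Finset.sum_sub_distrib, ← Finset.sum_mul]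
        congr 1
        exact Finset.sum_congr rfl fun l _ => mul_comm _ _
      rw [this, h, one_mul]
    have h3 : A lM j * (x lM - x lm) ≤ ∑ l, A l j * (x l - x lm) :=
      Finset.single_le_sum (f := fun l => A l j * (x l - x lm))
        (fun l _ => mul_nonneg (le_trans hη (hA l j)) (by linarith [hxge l]))
        (Finset.mem_univ lM)
    have h4 : η * (x lM - x lm) ≤ A lM j * (x lM - x lm) :=
      mul_le_mul_of_nonneg_right (hA lM j) (by linarith [hxge lM])
    linarith
  have hs : Finset.univ.sup' Finset.univ_nonempty (fun j => ∑ l, x l * A l j)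
      ≤ x lM - η * (x lM - x lm) := Finset.sup'_le _ _ fun j _ => key1 j
  have hi : x lm + η * (x lM - x lm) ≤ Finset.univ.inf' Finset.univ_nonempty
      (fun j => ∑ l, x l * A l j) := Finset.le_inf' _ _ fun j _ => key2 j
  have hx : sprd x = x lM - x lm := by rw [sprd, hlM, hlm]
  rw [hx, sprd]
  have hd : 0 ≤ x lM - x lm := by linarith [hxge lM]
  nlinarith

lemma abs_sub_le_sprd {x : Fin N → ℝ} (hsum : ∑ j, x j = 1) (j : Fin N) :
    |x j - 1 / (N:ℝ)| ≤ sprd x := by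
  have hNpos : (0:ℝ) < N := by exact_mod_cast NeZero.pos N
  have hinf : Finset.univ.inf' Finset.univ_nonempty x ≤ 1 / N := by
    have h := Finset.card_nsmul_le_sum Finset.univ x
      (Finset.univ.inf' Finset.univ_nonempty x) (fun l _ => Finset.inf'_le x (by simp))
    rw [hsum, Finset.card_univ, Fintype.card_fin, nsmul_eq_mul] at h
    rw [le_div_iff₀ hNpos]; linarith
  have hsup : 1 / (N:ℝ) ≤ Finset.univ.sup' Finset.univ_nonempty x := by
    have h := Finset.sum_le_card_nsmul Finset.univ x
      (Finset.univ.sup' Finset.univ_nonempty x) (fun l _ => Finset.le_sup' x (by simp))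
    rw [hsum, Finset.card_univ, Fintype.card_fin, nsmul_eq_mul] at h
    rw [div_le_iff₀ hNpos]; linarith
  have h1 : x j ≤ Finset.univ.sup' Finset.univ_nonempty x := Finset.le_sup' x (by simp)
  have h2 : Finset.univ.inf' Finset.univ_nonempty x ≤ x j := Finset.inf'_le x (by simp)
  rw [abs_le]; unfold sprd; constructor <;> linarith

end Sprd
end Stmt9Aux

open Stmt9Aux in
/-- Boyd et al. consensus convergence: under the doubly stochastic, `β`-bounded-entries
and `B`-bounded-connectivity assumptions, for every fixed `s ≥ 1` each entry of
`Φ_{k:s}` converges to `1/N` as `k → ∞`, i.e. `Φ_{k:s}` converges entrywise to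
`(1/N)·1·1ᵀ`. -/
theorem stmt9 (N B : ℕ) (hN : 2 ≤ N) (hB : 1 ≤ B)
    (β : ℝ) (hβ0 : 0 < β) (hβ1 : β < 1)
    (P : ℕ → Matrix (Fin N) (Fin N) ℝ)
    (hPnn : ∀ k, 1 ≤ k → ∀ i j, 0 ≤ P k i j)
    (hProw : ∀ k, 1 ≤ k → ∀ i, ∑ j, P k i j = 1)
    (hPcol : ∀ k, 1 ≤ k → ∀ j, ∑ i, P k i j = 1)
    (hPdiag : ∀ k, 1 ≤ k → ∀ i, β ≤ P k i i)
    (hPoff : ∀ k, 1 ≤ k → ∀ i j, P k i j ≠ 0 → β ≤ P k i j)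
    (hconn : ∀ m : ℕ, ∀ i j : Fin N,
      Relation.ReflTransGen
        (fun a b => ∃ k ∈ Finset.Icc (m * B + 1) ((m + 1) * B), 0 < P k a b) i j)
    (Phi : ℕ → ℕ → Matrix (Fin N) (Fin N) ℝ)
    (hPhi : ∀ k s, Phi k s = ((List.range' s (k + 1 - s)).map P).prod) :
    ∀ s : ℕ, 1 ≤ s → ∀ i j : Fin N,
      Filter.Tendsto (fun k => Phi k s i j) Filter.atTop (nhds (1 / (N : ℝ))) := by
  classical
  intro s hs i j
  haveI : NeZero N := ⟨by omega⟩
  -- The basic single-matrix property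
  have hP1 : ∀ k, 1 ≤ k → Nice β 1 (P k) := by
    intro k hk
    refine ⟨hPnn k hk, hProw k hk, hPcol k hk, fun i' => lt_of_lt_of_le hβ0 (hPdiag k hk i'),
      fun i' j' h => ?_⟩
    rw [pow_one]; exact hPoff k hk i' j' h
  -- partial products over [a, b)
  set G : ℕ → ℕ → Matrix (Fin N) (Fin N) ℝ :=
    fun a b => ((List.range' a (b - a)).map P).prod with hGdef
  have hG : ∀ a b, 1 ≤ a → Nice β (b - a) (G a b) := by
    intro a b ha
    have := nice_prod hβ0 P (List.range' a (b - a)) (fun k hk => by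
      rw [List.mem_range'_1] at hk
      exact hP1 k (le_trans ha hk.1))
    simpa using this
  have hGsplit : ∀ a b c, a ≤ b → b ≤ c → G a c = G a b * G b c := by
    intro a b c hab hbc
    rw [hGdef]
    simp only
    rw [← range'_split a b c hab hbc, List.map_append, List.prod_append]
  have hGsingle : ∀ k, G k (k + 1) = P k := by
    intro k
    rw [hGdef]
    simp
  have hPhiG : ∀ k, Phi k s = G s (k + 1) := fun k => hPhi k s
  -- positivity propagation
  have hedge : ∀ a b k (i' j' : Fin N), 1 ≤ a → a ≤ k → k < b → 0 < P k i' j' →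
      0 < G a b i' j' := by
    intro a b k i' j' ha hak hkb hP
    have hk1 : 1 ≤ k := le_trans ha hak
    have h1 : G a b = G a k * (P k * G (k + 1) b) := by
      rw [← hGsingle k, ← hGsplit k (k+1) b (by omega) (by omega),
        ← hGsplit a k b hak (by omega)]
    obtain ⟨hGnn1, _, _, hGd1, _⟩ := hG a k ha
    obtain ⟨hPnn', _, _, _, _⟩ := hP1 k hk1
    obtain ⟨hGnn2, _, _, hGd2, _⟩ := hG (k+1) b (by omega)
    have hmid : 0 < (P k * G (k+1) b) i' j' :=
      lt_of_lt_of_le (mul_pos hP (hGd2 j')) (mul_entry_le hPnn' hGnn2 i' j' j')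
    have hmidnn : ∀ i'' j'', 0 ≤ (P k * G (k+1) b) i'' j'' := by
      intro i'' j''
      rw [Matrix.mul_apply]
      exact Finset.sum_nonneg fun l _ => mul_nonneg (hPnn' i'' l) (hGnn2 l j'')
    rw [h1]
    exact lt_of_lt_of_le (mul_pos (hGd1 i') hmid) (mul_entry_le hGnn1 hmidnn i' i' j')
  -- a full window of N-1 blocks is entrywise positive
  have hwin : ∀ m (i' j' : Fin N), 0 < G (m * B + 1) ((m + (N - 1)) * B + 1) i' j' := by
    intro m i0 j0
    set S : ℕ → Finset (Fin N) :=
      fun t => Finset.univ.filter (fun j' => 0 < G (m * B + 1) ((m + t) * B + 1) i0 j') with hSdef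
    have hmemS : ∀ t j', j' ∈ S t ↔ 0 < G (m * B + 1) ((m + t) * B + 1) i0 j' := by
      intro t j'; simp [hSdef]
    have hle : ∀ t : ℕ, m * B + 1 ≤ (m + t) * B + 1 := by
      intro t
      have : m * B ≤ (m + t) * B := Nat.mul_le_mul_right B (by omega)
      omega
    have hle2 : ∀ t : ℕ, (m + t) * B + 1 ≤ (m + t + 1) * B + 1 := by
      intro t
      have : (m + t) * B ≤ (m + t + 1) * B := Nat.mul_le_mul_right B (by omega)
      omega
    have hself : ∀ t, i0 ∈ S t := by
      intro t
      rw [hmemS]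
      exact (hG (m * B + 1) ((m + t) * B + 1) (by omega)).2.2.2.1 i0
    have hsplitQ : ∀ t, G (m * B + 1) ((m + t + 1) * B + 1) =
        G (m * B + 1) ((m + t) * B + 1) * G ((m + t) * B + 1) ((m + t + 1) * B + 1) :=
      fun t => hGsplit _ _ _ (hle t) (hle2 t)
    have hsub : ∀ t, S t ⊆ S (t + 1) := by
      intro t j' hj'
      rw [hmemS] at hj' ⊢
      rw [show m + (t + 1) = m + t + 1 from by omega, hsplitQ t]
      obtain ⟨hn1, _, _, _, _⟩ := hG (m * B + 1) ((m + t) * B + 1) (by omega)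
      obtain ⟨hn2, _, _, hd2, _⟩ := hG ((m + t) * B + 1) ((m + t + 1) * B + 1) (by omega)
      exact lt_of_lt_of_le (mul_pos hj' (hd2 j')) (mul_entry_le hn1 hn2 i0 j' j')
    have hstep : ∀ t, S t ≠ Finset.univ → (S t).card + 1 ≤ (S (t + 1)).card := by
      intro t hne
      obtain ⟨j1, hj1⟩ : ∃ j1, j1 ∉ S t := by
        by_contra hc
        push_neg at hc
        exact hne (Finset.eq_univ_iff_forall.mpr hc)
      obtain ⟨x, hx, y, hy, k, hk, hPk⟩ :=
        cross (S := fun z => z ∈ S t) (hconn (m + t) i0 j1) (hself t) hj1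
      rw [Finset.mem_Icc] at hk
      have hy' : y ∈ S (t + 1) := by
        rw [hmemS]
        rw [show m + (t + 1) = m + t + 1 from by omega, hsplitQ t]
        rw [hmemS] at hx
        obtain ⟨hn1, _, _, _, _⟩ := hG (m * B + 1) ((m + t) * B + 1) (by omega)
        obtain ⟨hn2, _, _, _, _⟩ := hG ((m + t) * B + 1) ((m + t + 1) * B + 1) (by omega)
        have hQ : 0 < G ((m + t) * B + 1) ((m + t + 1) * B + 1) x y := by
          apply hedge _ _ k _ _ (by omega) hk.1 _ hPk
          have : (m + t + 1) * B = (m + t) * B + B := by ring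
          omega
        exact lt_of_lt_of_le (mul_pos hx hQ) (mul_entry_le hn1 hn2 i0 x y)
      have hins : insert y (S t) ⊆ S (t + 1) := by
        intro z hz
        rcases Finset.mem_insert.mp hz with h | h
        · exact h ▸ hy'
        · exact hsub t h
      calc (S t).card + 1 = (insert y (S t)).card := (Finset.card_insert_of_notMem hy).symm
        _ ≤ (S (t + 1)).card := Finset.card_le_card hins
    have hcard : ∀ t, t + 1 ≤ (S t).card ∨ S t = Finset.univ := by
      intro t
      induction t with
      | zero => exact Or.inl (Finset.card_pos.mpr ⟨i0, hself 0⟩)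
      | succ t ih =>
        by_cases hne : S t = Finset.univ
        · right
          have hsub' : Finset.univ ⊆ S (t + 1) := hne ▸ hsub t
          exact Finset.univ_subset_iff.mp hsub'
        · rcases ih with h | h
          · exact Or.inl (le_trans (by omega) (hstep t hne))
          · exact absurd h hne
    have hfin : S (N - 1) = Finset.univ := by
      rcases hcard (N - 1) with h | h
      · apply Finset.eq_univ_of_card
        have hle' : (S (N - 1)).card ≤ N := by
          simpa using Finset.card_le_univ (S (N - 1))
        simp only [Fintype.card_fin]
        omega
      · exact h
    have : j0 ∈ S (N - 1) := hfin ▸ Finset.mem_univ j0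
    rw [hmemS] at this
    exact this
  -- quantitative window bound
  set η : ℝ := β ^ ((N - 1) * B) with hηdef
  have hηpos : 0 < η := pow_pos hβ0 _
  have hwineta : ∀ m (i' j' : Fin N), η ≤ G (m * B + 1) ((m + (N - 1)) * B + 1) i' j' := by
    intro m i' j'
    obtain ⟨_, _, _, _, hlow⟩ := hG (m * B + 1) ((m + (N - 1)) * B + 1) (by omega)
    have hlen : ((m + (N - 1)) * B + 1) - (m * B + 1) = (N - 1) * B := by
      rw [Nat.add_mul]; omega
    rw [hηdef, ← hlen]
    exact hlow i' j' (ne_of_gt (hwin m i' j'))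
  have hη2 : 2 * η ≤ 1 := by
    obtain ⟨_, hrow, _, _, _⟩ := hG (0 * B + 1) ((0 + (N - 1)) * B + 1) (by omega)
    have h := Finset.card_nsmul_le_sum Finset.univ
      (fun j' => G (0 * B + 1) ((0 + (N - 1)) * B + 1) i j') η
      (fun l _ => hwineta 0 i l)
    rw [hrow i, Finset.card_univ, Fintype.card_fin, nsmul_eq_mul] at h
    have hN2 : (2:ℝ) ≤ N := by exact_mod_cast hN
    nlinarith
  -- window sequence
  set a : ℕ → ℕ := fun t => (s + t * (N - 1)) * B + 1 with hadef
  have ha_ge : ∀ t, s ≤ a t := by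
    intro t
    show s ≤ (s + t * (N - 1)) * B + 1
    have h1 : s * B ≤ (s + t * (N - 1)) * B := Nat.mul_le_mul_right B (by omega)
    have h2 : s ≤ s * B := Nat.le_mul_of_pos_right s (by omega)
    omega
  have ha1 : ∀ t, 1 ≤ a t := fun t => le_trans hs (ha_ge t)
  have ha_mono : ∀ t, a t ≤ a (t + 1) := by
    intro t
    show (s + t * (N - 1)) * B + 1 ≤ (s + (t + 1) * (N - 1)) * B + 1
    have h0 : t * (N - 1) ≤ (t + 1) * (N - 1) := Nat.mul_le_mul_right (N - 1) (by omega)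
    have h1 : (s + t * (N - 1)) * B ≤ (s + (t + 1) * (N - 1)) * B :=
      Nat.mul_le_mul_right B (by omega)
    omega
  have hw : ∀ t (i' j' : Fin N), η ≤ G (a t) (a (t + 1)) i' j' := by
    intro t i' j'
    have harith : a (t + 1) = ((s + t * (N - 1)) + (N - 1)) * B + 1 := by
      show (s + (t + 1) * (N - 1)) * B + 1 = ((s + t * (N - 1)) + (N - 1)) * B + 1
      ring_nf
    rw [harith]
    exact hwineta (s + t * (N - 1)) i' j'
  -- spread decay along windows
  have hsprd : ∀ T, sprd (fun j' => G s (a T) i j') ≤ (1 - 2 * η) ^ T := by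
    intro T
    induction T with
    | zero =>
      obtain ⟨hn, hr, _, _, _⟩ := hG s (a 0) hs
      simp only [pow_zero]
      apply sprd_le_one (fun j' => hn i j')
      intro j'
      calc G s (a 0) i j' ≤ ∑ l, G s (a 0) i l :=
            Finset.single_le_sum (fun l _ => hn i l) (Finset.mem_univ j')
        _ = 1 := hr i
    | succ T ih =>
      have hsplitT : G s (a (T + 1)) = G s (a T) * G (a T) (a (T + 1)) :=
        hGsplit s (a T) (a (T + 1)) (ha_ge T) (ha_mono T)
      obtain ⟨_, _, hcolT, _, _⟩ := hG (a T) (a (T + 1)) (ha1 T)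
      have hrow_eq : (fun j' => G s (a (T+1)) i j') =
          (fun j' => ∑ l, (fun l => G s (a T) i l) l * (G (a T) (a (T+1))) l j') := by
        funext j'
        rw [hsplitT, Matrix.mul_apply]
      rw [hrow_eq]
      calc sprd (fun j' => ∑ l, (fun l => G s (a T) i l) l * (G (a T) (a (T+1))) l j')
          ≤ (1 - 2 * η) * sprd (fun l => G s (a T) i l) :=
            sprd_contract (le_of_lt hηpos) (fun l j' => hw T l j') hcolT _
        _ ≤ (1 - 2 * η) * (1 - 2 * η) ^ T := by
            apply mul_le_mul_of_nonneg_left ih (by linarith)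
        _ = (1 - 2 * η) ^ (T + 1) := by ring
  -- conclusion
  rw [Metric.tendsto_atTop]
  intro ε hε
  obtain ⟨T, hT⟩ := exists_pow_lt_of_lt_one hε (show 1 - 2*η < 1 by linarith)
  refine ⟨a T, fun k hk => ?_⟩
  have hsplit2 : G s (k + 1) = G s (a T) * G (a T) (k + 1) :=
    hGsplit s (a T) (k + 1) (ha_ge T) (by omega)
  obtain ⟨hGnnT, _, hGcolT, _, _⟩ := hG (a T) (k + 1) (ha1 T)
  have hrow_eq : (fun j' => G s (k+1) i j') =
      (fun j' => ∑ l, (fun l => G s (a T) i l) l * (G (a T) (k+1)) l j') := by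
    funext j'
    rw [hsplit2, Matrix.mul_apply]
  have hcontr : sprd (fun j' => G s (k+1) i j') ≤ (1 - 0) * sprd (fun l => G s (a T) i l) := by
    rw [hrow_eq]
    have := sprd_contract (le_refl (0:ℝ)) (A := G (a T) (k+1))
      (fun l j' => hGnnT l j') hGcolT (fun l => G s (a T) i l)
    simpa using this
  obtain ⟨_, hProwk, _, _, _⟩ := hG s (k + 1) hs
  have hmean := abs_sub_le_sprd (x := fun j' => G s (k+1) i j') (hProwk i) j
  rw [Real.dist_eq, hPhiG k]
  calc |G s (k+1) i j - 1 / (N:ℝ)| ≤ sprd (fun j' => G s (k+1) i j') := hmean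
    _ ≤ (1 - 0) * sprd (fun l => G s (a T) i l) := hcontr
    _ = sprd (fun l => G s (a T) i l) := by ring
    _ ≤ (1 - 2*η) ^ T := hsprd T
    _ < ε := hT
end
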